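/- Let n = 2k and F^i(x) = x^{2^i} h(Tr^n_k(x)) where h : F_{2^k} → F_{2^k} is not a permutation. Then F^i has no bent components: for every nonzero α ∈ F_{2^n}, the function x ↦ Tr^n_1(αF^i(x)) is not bent. -/

import Mathlib

open Finset

def chr (b : ZMod 2) : ℤ := if b = 0 then 1 else -1

variable {K : Type*} [Field K] [Fintype K] [Algebra (ZMod 2) K]

/-- The absolute trace `Tr^n_1 : F_{2^n} → F_2`. -/
noncomputable def tr (x : K) : ZMod 2 := Algebra.trace (ZMod 2) K x

/-- The Walsh transform of a Boolean function `f` on `K = F_{2^n}`. -/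
noncomputable def walshF (f : K → ZMod 2) (l : K) : ℤ :=
  ∑ x, chr (f x + tr (l * x))

/-- `f` is bent on `K = F_{2^{2k}}`: all Walsh values are `±2^k`. -/
def IsBentF (k : ℕ) (f : K → ZMod 2) : Prop :=
  ∀ l : K, walshF f l = 2 ^ k ∨ walshF f l = -(2 ^ k)

set_option linter.unusedSectionVars false
set_option linter.unusedVariables false

lemma chr_add : ∀ a b : ZMod 2, chr (a + b) = chr a * chr b := by decide

lemma chr_add_one : ∀ a : ZMod 2, chr (a + 1) = - chr a := by decide

lemma zmod2_eq_one : ∀ a : ZMod 2, a ≠ 0 → a = 1 := by decide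

lemma charPK : CharP K 2 := by
  have : Function.Injective (algebraMap (ZMod 2) K) := (algebraMap (ZMod 2) K).injective
  exact charP_of_injective_algebraMap this 2

lemma tr_add (x y : K) : tr (x + y) = tr x + tr y := map_add (Algebra.trace (ZMod 2) K) x y

lemma tr_zero : tr (0 : K) = 0 := map_zero (Algebra.trace (ZMod 2) K)

lemma tr_sq (x : K) : tr (x ^ 2) = tr x := by
  haveI := charPK (K := K)
  haveI : ExpChar K 2 := ExpChar.prime Nat.prime_two
  let e : K ≃ₐ[ZMod 2] K := AlgEquiv.ofBijective
    { toRingHom := frobenius K 2,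
      commutes' := fun r => by
        show (algebraMap (ZMod 2) K r) ^ 2 = algebraMap (ZMod 2) K r
        rw [← map_pow]
        congr 1
        revert r
        decide }
    ((Finite.injective_iff_bijective).1 (frobenius_inj K 2))
  have := Algebra.trace_eq_of_algEquiv e x
  simpa [e, tr, frobenius_def] using this

lemma tr_pow_two_pow (j : ℕ) (x : K) : tr (x ^ 2 ^ j) = tr x := by
  induction j with
  | zero => simp
  | succ n ih => rw [pow_succ, pow_mul, tr_sq, ih]

lemma tr_nondeg (a : K) (ha : a ≠ 0) : ∃ b : K, tr (a * b) ≠ 0 := by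
  have htr := (traceForm_nondegenerate (ZMod 2) K).1 a
  by_contra hf
  push_neg at hf
  refine ha (htr ?_)
  intro b
  simpa [Algebra.traceForm_apply, tr] using hf b

open scoped Classical in
noncomputable def Sf (K : Type*) [Field K] [Fintype K] (k : ℕ) : Finset K :=
  univ.filter fun a => a ^ 2 ^ k = a

lemma mem_Sf {k : ℕ} {a : K} : a ∈ Sf K k ↔ a ^ 2 ^ k = a := by simp [Sf]

lemma Sf_zero {k : ℕ} : (0 : K) ∈ Sf K k := by simp [mem_Sf]

lemma Sf_add [CharP K 2] {k : ℕ} {a b : K} (ha : a ∈ Sf K k) (hb : b ∈ Sf K k) :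
    a + b ∈ Sf K k := by
  rw [mem_Sf] at *
  rw [add_pow_char_pow, ha, hb]

lemma Sf_mul {k : ℕ} {a b : K} (ha : a ∈ Sf K k) (hb : b ∈ Sf K k) :
    a * b ∈ Sf K k := by
  rw [mem_Sf] at *
  rw [mul_pow, ha, hb]

lemma Sf_inv {k : ℕ} {a : K} (ha : a ∈ Sf K k) : a⁻¹ ∈ Sf K k := by
  rw [mem_Sf] at *
  rw [inv_pow, ha]

lemma Sf_pow {k j : ℕ} {a : K} (ha : a ∈ Sf K k) : a ^ 2 ^ j ∈ Sf K k := by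
  rw [mem_Sf] at *
  rw [← pow_mul, mul_comm, pow_mul, ha]

lemma card_Sf_le {k : ℕ} (hk : 0 < k) : (Sf K k).card ≤ 2 ^ k := by
  classical
  set p : Polynomial K := Polynomial.X ^ 2 ^ k - Polynomial.X with hp
  have hdeg : p.natDegree = 2 ^ k := by
    rw [hp]
    rw [Polynomial.natDegree_sub_eq_left_of_natDegree_lt, Polynomial.natDegree_X_pow]
    rw [Polynomial.natDegree_X_pow, Polynomial.natDegree_X]
    exact Nat.one_lt_two_pow_iff.mpr (by omega)
  have hp0 : p ≠ 0 := by
    intro h0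
    rw [h0, Polynomial.natDegree_zero] at hdeg
    exact absurd hdeg.symm (by positivity)
  have hsub : Sf K k ⊆ p.roots.toFinset := by
    intro a ha
    rw [mem_Sf] at ha
    rw [Multiset.mem_toFinset, Polynomial.mem_roots hp0]
    simp [Polynomial.IsRoot, hp, ha]
  calc (Sf K k).card ≤ p.roots.toFinset.card := Finset.card_le_card hsub
    _ ≤ Multiset.card p.roots := Multiset.toFinset_card_le _
    _ ≤ p.natDegree := p.card_roots'
    _ = 2 ^ k := hdeg

open scoped Classical

lemma sum_chr_eq_zero [CharP K 2] (s : Finset K) (z u0 : K) (hu0 : u0 ∈ s)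
    (hcl : ∀ u ∈ s, u + u0 ∈ s) (h1 : tr (z * u0) = 1) :
    ∑ u ∈ s, chr (tr (z * u)) = 0 := by
  have key : ∑ u ∈ s, chr (tr (z * (u + u0))) = ∑ u ∈ s, chr (tr (z * u)) := by
    refine Finset.sum_equiv (Equiv.addRight u0) (fun u => ?_) (fun u _ => rfl)
    constructor
    · intro hu; exact hcl u hu
    · intro hu
      have := hcl _ hu
      simpa [add_assoc, CharTwo.add_self_eq_zero] using this
  have key2 : ∀ u : K, chr (tr (z * (u + u0))) = - chr (tr (z * u)) := by
    intro u
    rw [mul_add, tr_add, h1, chr_add_one]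
  simp_rw [key2] at key
  rw [Finset.sum_neg_distrib] at key
  omega

lemma sum_chr_eq_zero' [CharP K 2] (s : Finset K) (z : K)
    (hcl : ∀ u ∈ s, ∀ v ∈ s, u + v ∈ s) (hz : ∃ u0 ∈ s, tr (z * u0) ≠ 0) :
    ∑ u ∈ s, chr (tr (z * u)) = 0 := by
  obtain ⟨u0, hu0, h1⟩ := hz
  exact sum_chr_eq_zero s z u0 hu0 (fun u hu => hcl u hu u0 hu0) (zmod2_eq_one _ h1)

lemma fiber_eq [CharP K 2] {k : ℕ} {c x0 : K} (hx0 : x0 + x0 ^ 2 ^ k = c) :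
    Finset.univ.filter (fun x => x + x ^ 2 ^ k = c) = (Sf K k).image (fun u => x0 + u) := by
  have h2 : (2 : K) = 0 := CharTwo.two_eq_zero
  ext x
  simp only [Finset.mem_filter, Finset.mem_univ, true_and, Finset.mem_image]
  constructor
  · intro hx
    refine ⟨x0 + x, ?_, by rw [← add_assoc, CharTwo.add_self_eq_zero, zero_add]⟩
    rw [mem_Sf, add_pow_char_pow]
    linear_combination hx0 + hx + (c - x0 - x) * h2
  · rintro ⟨u, hu, rfl⟩
    rw [add_pow_char_pow, mem_Sf.1 hu]
    linear_combination hx0 + u * h2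

section counting

variable [CharP K 2] {k : ℕ}

lemma TmemS (hcard : Fintype.card K = 2 ^ (2 * k)) (x : K) : x + x ^ 2 ^ k ∈ Sf K k := by
  rw [mem_Sf, add_pow_char_pow, ← pow_mul, ← pow_add]
  have hkk : k + k = 2 * k := by ring
  rw [hkk, ← hcard, FiniteField.pow_card, add_comm]

lemma card_decomp (hcard : Fintype.card K = 2 ^ (2 * k)) :
    Fintype.card K = ((Finset.univ : Finset K).image (fun x => x + x ^ 2 ^ k)).card * (Sf K k).card := by
  rw [← Finset.card_univ,
    Finset.card_eq_sum_card_fiberwise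
      (f := fun x => x + x ^ 2 ^ k) (t := (Finset.univ : Finset K).image (fun x => x + x ^ 2 ^ k))
      (fun x _ => Finset.mem_image_of_mem _ (Finset.mem_univ x))]
  rw [Finset.sum_congr rfl (fun c hc => ?_), Finset.sum_const, smul_eq_mul]
  obtain ⟨x0, -, hx0⟩ := Finset.mem_image.1 hc
  rw [fiber_eq hx0, Finset.card_image_of_injective _ (add_right_injective x0)]

lemma card_Sf (hk : 0 < k) (hcard : Fintype.card K = 2 ^ (2 * k)) :
    (Sf K k).card = 2 ^ k ∧ (Finset.univ : Finset K).image (fun x => x + x ^ 2 ^ k) = Sf K k := by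
  set A := ((Finset.univ : Finset K).image (fun x => x + x ^ 2 ^ k)).card with hA
  set B := (Sf K k).card with hB
  have hsub : (Finset.univ : Finset K).image (fun x => x + x ^ 2 ^ k) ⊆ Sf K k := by
    intro w hw
    obtain ⟨x, -, rfl⟩ := Finset.mem_image.1 hw
    exact TmemS hcard x
  have hAB : A * B = 2 ^ k * 2 ^ k := by
    rw [← card_decomp hcard, hcard, two_mul, pow_add]
  have hAle : A ≤ B := Finset.card_le_card hsub
  have hBle : B ≤ 2 ^ k := card_Sf_le hk
  have hBeq : B = 2 ^ k := by
    have hB0 : 0 < B := by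
      rcases Nat.eq_zero_or_pos B with h | h
      · rw [h, mul_zero] at hAB
        exact absurd hAB.symm (by positivity)
      · exact h
    nlinarith
  have hAeq : A = 2 ^ k := by
    have h0 : 0 < 2 ^ k := by positivity
    nlinarith
  exact ⟨hBeq, Finset.eq_of_subset_of_card_le hsub (by omega)⟩

lemma tr_Sf_zero (hk : 0 < k) (hcard : Fintype.card K = 2 ^ (2 * k)) {w : K}
    (hw : w ∈ Sf K k) : tr w = 0 := by
  rw [← (card_Sf hk hcard).2] at hw
  obtain ⟨x, -, rfl⟩ := Finset.mem_image.1 hw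
  rw [tr_add, tr_pow_two_pow, CharTwo.add_self_eq_zero]

lemma card_ker (hcard : Fintype.card K = 2 ^ (2 * k)) (hk : 0 < k) :
    ((Finset.univ : Finset K).filter fun z : K => ∀ u ∈ Sf K k, tr (z * u) = 0).card
      * (Sf K k).card = Fintype.card K := by
  have D : ∑ z : K, ∑ u ∈ Sf K k, chr (tr (z * u)) = (Fintype.card K : ℤ) := by
    rw [Finset.sum_comm]
    rw [Finset.sum_eq_single_of_mem 0 Sf_zero ?_]
    case _ => simp [tr_zero, chr, Finset.card_univ]
    · intro u _ hne
      obtain ⟨b, hb⟩ := tr_nondeg u hne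
      have : ∀ z : K, chr (tr (z * u)) = chr (tr (u * z)) := fun z => by rw [mul_comm]
      simp_rw [this]
      exact sum_chr_eq_zero' Finset.univ u (fun _ _ _ _ => Finset.mem_univ _)
        ⟨b, Finset.mem_univ b, hb⟩
  have E : ∑ z : K, ∑ u ∈ Sf K k, chr (tr (z * u)) =
      (((Finset.univ : Finset K).filter fun z : K => ∀ u ∈ Sf K k, tr (z * u) = 0).card
        * (Sf K k).card : ℤ) := by
    rw [← Finset.sum_filter_add_sum_filter_not Finset.univ
      (fun z : K => ∀ u ∈ Sf K k, tr (z * u) = 0)]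
    have h1 : ∀ z ∈ (Finset.univ : Finset K).filter (fun z : K => ∀ u ∈ Sf K k, tr (z * u) = 0),
        ∑ u ∈ Sf K k, chr (tr (z * u)) = ((Sf K k).card : ℤ) := by
      intro z hz
      rw [Finset.sum_congr rfl (fun u hu => by rw [(Finset.mem_filter.1 hz).2 u hu])]
      simp [chr]
    have h2 : ∀ z ∈ (Finset.univ : Finset K).filter
        (fun z : K => ¬ ∀ u ∈ Sf K k, tr (z * u) = 0),
        ∑ u ∈ Sf K k, chr (tr (z * u)) = 0 := by
      intro z hz
      have hz' := (Finset.mem_filter.1 hz).2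
      push_neg at hz'
      obtain ⟨u0, hu0, hne⟩ := hz'
      exact sum_chr_eq_zero' (Sf K k) z (fun u hu v hv => Sf_add hu hv) ⟨u0, hu0, hne⟩
    rw [Finset.sum_congr rfl h1, Finset.sum_congr rfl h2]
    simp [Finset.sum_const, nsmul_eq_mul]
  rw [D] at E
  exact_mod_cast E.symm

lemma ker_sub (hk : 0 < k) (hcard : Fintype.card K = 2 ^ (2 * k)) {z : K} (hz : z ∉ Sf K k) :
    ∃ u ∈ Sf K k, tr (z * u) ≠ 0 := by
  by_contra hcon
  push_neg at hcon
  set Kf := (Finset.univ : Finset K).filter fun z : K => ∀ u ∈ Sf K k, tr (z * u) = 0 with hKf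
  have hzK : z ∈ Kf := Finset.mem_filter.2 ⟨Finset.mem_univ z, hcon⟩
  have hsub : Sf K k ⊆ Kf := by
    intro w hw
    refine Finset.mem_filter.2 ⟨Finset.mem_univ w, fun u hu => ?_⟩
    exact tr_Sf_zero hk hcard (Sf_mul hw hu)
  have hcardK := card_ker hcard hk
  rw [(card_Sf hk hcard).1, hcard] at hcardK
  have hKcard : Kf.card = 2 ^ k := by
    have h0 : (0:ℕ) < 2 ^ k := by positivity
    have : Kf.card * 2 ^ k = 2 ^ k * 2 ^ k := by rw [hcardK, two_mul, pow_add]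
    exact Nat.eq_of_mul_eq_mul_right h0 this
  have : Sf K k = Kf :=
    Finset.eq_of_subset_of_card_le hsub (by rw [hKcard, (card_Sf hk hcard).1])
  rw [← this] at hzK
  exact hz hzK

end counting

section frob

variable [CharP K 2]

lemma frob_bij (i : ℕ) : Function.Bijective (fun x : K => x ^ 2 ^ i) := by
  refine Finite.injective_iff_bijective.1 ?_
  intro a b hab
  simp only at hab
  have hs : (a - b) ^ 2 ^ i = 0 := by rw [sub_pow_char_pow, hab, sub_self]
  have := pow_eq_zero_iff (n := 2 ^ i) (by positivity) |>.1 hs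
  exact sub_eq_zero.1 this

noncomputable def fInv (i : ℕ) (z : K) : K := (Equiv.ofBijective _ (frob_bij (K := K) i)).symm z

lemma fInv_pow (i : ℕ) (z : K) : (fInv i z) ^ 2 ^ i = z :=
  (Equiv.ofBijective _ (frob_bij (K := K) i)).apply_symm_apply z

lemma fInv_add (i : ℕ) (a b : K) : fInv i (a + b) = fInv i a + fInv i b := by
  apply (frob_bij (K := K) i).1
  show (fInv i (a + b)) ^ 2 ^ i = (fInv i a + fInv i b) ^ 2 ^ i
  rw [fInv_pow, add_pow_char_pow, fInv_pow, fInv_pow]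

lemma fInv_mem_Sf {k : ℕ} (i : ℕ) {z : K} (hz : z ∈ Sf K k) : fInv i z ∈ Sf K k := by
  apply mem_Sf.2
  apply (frob_bij (K := K) i).1
  show ((fInv i z) ^ 2 ^ k) ^ 2 ^ i = (fInv i z) ^ 2 ^ i
  rw [← pow_mul, mul_comm (2 ^ k) (2 ^ i), pow_mul, fInv_pow, mem_Sf.1 hz]

lemma tr_fInv_mul (i : ℕ) (z u : K) : tr (z * u ^ 2 ^ i) = tr (fInv i z * u) := by
  conv_lhs => rw [← fInv_pow i z]
  rw [← mul_pow, tr_pow_two_pow]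

end frob

theorem stmt12 (k i : ℕ) (hk : 0 < k) (hcard : Fintype.card K = 2 ^ (2 * k))
    (h : K → K)
    (hsub : ∀ a : K, a ^ (2 ^ k) = a → (h a) ^ (2 ^ k) = h a)
    (hnotperm : ¬ Set.BijOn h {a : K | a ^ (2 ^ k) = a} {a : K | a ^ (2 ^ k) = a}) :
    ∀ α : K, α ≠ 0 →
      ¬ IsBentF k (fun x => tr (α * (x ^ (2 ^ i) * h (x + x ^ (2 ^ k))))) := by
  haveI := charPK (K := K)
  intro α hαS' hbent
  have h2K : (2 : K) = 0 := CharTwo.two_eq_zero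
  have hhc : ∀ c ∈ Sf K k, h c ∈ Sf K k := fun c hc => mem_Sf.2 (hsub c (mem_Sf.1 hc))
  have hbeta : ∃ β : K, ∀ c ∈ Sf K k, fInv i (α * h c) + β ∉ Sf K k := by
    by_cases hαS : α ∈ Sf K k
    · have hlt : (Sf K k).card < Fintype.card K := by
        rw [(card_Sf hk hcard).1, hcard]
        exact Nat.pow_lt_pow_right one_lt_two (by omega)
      have hpos : 0 < (Sf K k)ᶜ.card := by
        rw [Finset.card_compl]
        omega
      obtain ⟨β, hβc⟩ := Finset.card_pos.1 hpos
      have hβn : β ∉ Sf K k := Finset.mem_compl.1 hβc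
      refine ⟨β, fun c hc hmem => hβn ?_⟩
      have hfi : fInv i (α * h c) ∈ Sf K k := fInv_mem_Sf i (Sf_mul hαS (hhc c hc))
      have hrw : β = (fInv i (α * h c) + β) + fInv i (α * h c) := by
        rw [add_comm (fInv i (α * h c)) β, add_assoc, CharTwo.add_self_eq_zero, add_zero]
      rw [hrw]
      exact Sf_add hmem hfi
    · have hfin : ({a : K | a ^ 2 ^ k = a}).Finite := Set.toFinite _
      have hmaps : Set.MapsTo h {a : K | a ^ 2 ^ k = a} {a : K | a ^ 2 ^ k = a} :=
        fun a ha => hsub a ha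
      have hnsurj : ¬ Set.SurjOn h {a : K | a ^ 2 ^ k = a} {a : K | a ^ 2 ^ k = a} := by
        intro hs
        exact hnotperm ((hfin.surjOn_iff_bijOn_of_mapsTo hmaps).1 hs)
      rw [Set.SurjOn] at hnsurj
      obtain ⟨γ, hγS, hγn⟩ := Set.not_subset.1 hnsurj
      refine ⟨fInv i (α * γ), fun c hc hmem => ?_⟩
      rw [← fInv_add, ← mul_add] at hmem
      have hne : h c + γ ≠ 0 := by
        intro h0
        apply hγn
        have hγh : γ = h c := by linear_combination h0 - h c * h2K
        exact ⟨c, mem_Sf.1 hc, hγh.symm⟩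
      have hprod : α * (h c + γ) ∈ Sf K k := by
        have hp := Sf_pow (j := i) hmem
        rwa [fInv_pow] at hp
      have hsum : h c + γ ∈ Sf K k := Sf_add (hhc c hc) (mem_Sf.2 hγS)
      apply hαS
      have hid : α = α * (h c + γ) * (h c + γ)⁻¹ := (mul_inv_cancel_right₀ hne α).symm
      rw [hid]
      exact Sf_mul hprod (Sf_inv hsum)
  obtain ⟨β, hβ⟩ := hbeta
  have hW : walshF (fun x => tr (α * (x ^ (2 ^ i) * h (x + x ^ (2 ^ k))))) β = 0 := by
    rw [walshF]
    rw [← Finset.sum_fiberwise_of_maps_to (g := fun x : K => x + x ^ 2 ^ k)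
      (fun x _ => TmemS hcard x)]
    refine Finset.sum_eq_zero fun c hc => ?_
    rcases Finset.eq_empty_or_nonempty
        (Finset.univ.filter fun x : K => x + x ^ 2 ^ k = c) with he | ⟨x0, hx0⟩
    · rw [he, Finset.sum_empty]
    · have hx0' : x0 + x0 ^ 2 ^ k = c := (Finset.mem_filter.1 hx0).2
      rw [fiber_eq hx0', Finset.sum_image (fun u _ v _ huv => add_right_injective x0 huv)]
      set z := fInv i (α * h c) + β with hz
      have hzn : z ∉ Sf K k := hβ c hc
      have hterm : ∀ u ∈ Sf K k,
          chr ((fun x => tr (α * (x ^ 2 ^ i * h (x + x ^ 2 ^ k)))) (x0 + u) + tr (β * (x0 + u)))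
            = chr (tr (α * (x0 ^ 2 ^ i * h c)) + tr (β * x0)) * chr (tr (z * u)) := by
        intro u hu
        have hTc : (x0 + u) + (x0 + u) ^ 2 ^ k = c := by
          rw [add_pow_char_pow, mem_Sf.1 hu]
          linear_combination hx0' + u * h2K
        simp only
        rw [hTc, add_pow_char_pow]
        have e1 : α * ((x0 ^ 2 ^ i + u ^ 2 ^ i) * h c)
            = α * (x0 ^ 2 ^ i * h c) + (α * h c) * u ^ 2 ^ i := by ring
        rw [e1, mul_add β, tr_add, tr_add, add_add_add_comm, tr_fInv_mul,
          ← tr_add (fInv i (α * h c) * u) (β * u), ← add_mul, ← hz, chr_add]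
      rw [Finset.sum_congr rfl hterm, ← Finset.mul_sum,
        sum_chr_eq_zero' (Sf K k) z (fun u hu v hv => Sf_add hu hv) (ker_sub hk hcard hzn),
        mul_zero]
  rcases hbent β with h1 | h1 <;> rw [hW] at h1
  · exact absurd h1.symm (by positivity)
  · have hpos : (0:ℤ) < 2 ^ k := by positivity
    omega
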